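/- Let m, n, a, b be positive integers and let q be a real number with 0 < q < 1. Let A and B be disjoint sets with A ∪ B = [a+b] = {1, …, a+b}, |A| = a and |B| = b, and set A' := [m] ∪ {m + x : x ∈ A} ∪ {m+a+b+j : 1 ≤ j ≤ n} and B' := [m] ∪ {m + y : y ∈ B} ∪ {m+a+b+j : 1 ≤ j ≤ n}. Then S_q(A') · S_q(B') = q^{abn + (a+b)·binom(n+1,2)} · ∏_{i=1}^{a+b} (q^i;q)_m · (q^{a+b−i+1};q)_n · ∏_{j=1}^{n} (q^{a+b+j};q)_m² · [H_q(a) · H_q(b) · H_q(m)² · H_q(n)² / (H_q(m+n+a) · H_q(m+n+b))] · S_q(A) · S_q(B). -/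

import Mathlib

open scoped Classical

/-- The shifted q-factorial `(a;q)_k = (1-a)(1-aq)⋯(1-aq^{k-1})`. -/
noncomputable def qPoch (a q : ℝ) (k : ℕ) : ℝ := ∏ i ∈ Finset.range k, (1 - a * q ^ i)

/-- The hyper q-shifted factor `H_q(n) = ∏_{k=1}^{n-1} (q;q)_k`. -/
noncomputable def Hq (q : ℝ) (n : ℕ) : ℝ := ∏ k ∈ Finset.range n, qPoch q q k

/-- `∏_{u < v in U} (q^v - q^u)`. -/
noncomputable def vand (q : ℝ) (U : Finset ℕ) : ℝ :=
  ∏ u ∈ U, ∏ v ∈ U.filter (fun v => u < v), (q ^ v - q ^ u)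

/-- For `U = {u₁ < u₂ < ⋯ < u_k}` a finite set of positive integers,
`S_q(U) = q^{∑ (uᵢ - i)} ∏_{i<j} (q^{u_j} - q^{u_i})/(q^j - q^i)`, the Schur
function `s_{λ(U)}(q, q², …, q^k)`. -/
noncomputable def Sq (q : ℝ) (U : Finset ℕ) : ℝ :=
  q ^ ((∑ u ∈ U, (u : ℤ)) - ((U.card : ℤ) * (U.card + 1)) / 2) *
    vand q U / vand q (Finset.Icc 1 U.card)


open scoped Classical





open Finset

def gg (k : ℕ) : ℕ := ∑ i ∈ Finset.range k, i
def vv (k : ℕ) : ℕ := ∑ i ∈ Finset.Icc 1 k, i * (k - i)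

lemma gg_succ (k : ℕ) : gg (k + 1) = gg k + k := by simp [gg, Finset.sum_range_succ]

lemma gg_add (x y : ℕ) : gg (x + y) = gg x + gg y + x * y := by
  induction y with
  | zero => simp [gg]
  | succ y ih =>
    rw [show x + (y+1) = (x+y)+1 from rfl, gg_succ, ih, gg_succ]; ring

lemma gg_cast (k : ℕ) : (gg k : ℤ) * 2 = k * (k - 1) := by
  induction k with
  | zero => simp [gg]
  | succ k ih => rw [gg_succ]; push_cast; push_cast at ih; linear_combination ih

lemma sum_Icc_id (k : ℕ) : ∑ i ∈ Icc 1 k, i = gg (k + 1) := by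
  induction k with
  | zero => simp [gg]
  | succ k ih =>
    rw [Finset.sum_Icc_succ_top (by omega), ih, gg_succ (k+1)]

lemma vv_succ (k : ℕ) : vv (k + 1) = vv k + gg (k + 1) := by
  unfold vv
  rw [Finset.sum_Icc_succ_top (by omega)]
  have h : ∀ i ∈ Icc 1 k, i * (k + 1 - i) = i * (k - i) + i := by
    intro i hi; simp [mem_Icc] at hi
    rw [show k + 1 - i = (k - i) + 1 by omega, Nat.mul_succ]
  rw [Finset.sum_congr rfl h, Finset.sum_add_distrib, sum_Icc_id]
  simp

lemma vv_cast (k : ℕ) : (vv k : ℤ) * 6 = k^3 - k := by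
  induction k with
  | zero => simp [vv]
  | succ k ih =>
    have hg := gg_cast (k+1)
    rw [vv_succ]; push_cast; push_cast at ih hg; linear_combination ih + 3 * hg

lemma choose2 (k : ℕ) : Nat.choose k 2 = gg k := by
  induction k with
  | zero => simp [gg]
  | succ k ih =>
    have h := Nat.choose_succ_succ k 1
    have h2 := Nat.choose_one_right k
    norm_num at h
    rw [gg_succ]
    omega

lemma div2_gg (k : ℕ) : ((k : ℤ) * ((k : ℤ) + 1)) / 2 = gg (k + 1) := by
  have h := gg_cast (k+1)
  push_cast at h
  rw [show (k:ℤ) * ((k:ℤ)+1) = (gg (k+1) : ℤ) * 2 by linarith]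
  exact Int.mul_ediv_cancel _ two_ne_zero

lemma tt_eq (U : Finset ℕ) : (∑ u ∈ U, (U.filter (fun v => u < v)).card) = gg U.card := by
  induction U using Finset.induction_on_max with
  | empty => simp [gg]
  | insert M S hlt ih =>
    have hM : M ∉ S := fun h => lt_irrefl M (hlt M h)
    rw [Finset.sum_insert hM]
    have h1 : (insert M S).filter (fun v => M < v) = ∅ := by
      ext v; simp only [mem_filter, mem_insert, notMem_empty, iff_false]
      rintro ⟨rfl | hv, hlt'⟩
      · omega
      · exact absurd (hlt v hv) (by omega)
    have h2 : ∀ u ∈ S, ((insert M S).filter (fun v => u < v)).card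
        = (S.filter (fun v => u < v)).card + 1 := by
      intro u hu
      rw [Finset.filter_insert, if_pos (hlt u hu), Finset.card_insert_of_notMem
        (fun h => hM (Finset.mem_of_mem_filter M h))]
    rw [h1, Finset.sum_congr rfl h2, Finset.sum_add_distrib, ih, Finset.sum_const,
      Finset.card_insert_of_notMem hM, gg_succ]
    simp [mul_comm]


lemma prod_Icc_one {M : Type*} [CommMonoid M] (f : ℕ → M) (k : ℕ) :
    ∏ i ∈ Icc 1 k, f i = ∏ j ∈ range k, f (1 + j) := by
  rw [← Finset.Ico_add_one_right_eq_Icc, Finset.prod_Ico_eq_prod_range]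
  simp

lemma prod_Icc_aux (q x : ℝ) (k : ℕ) :
    ∏ i ∈ Icc 1 k, (x * q ^ i - 1) = (-1) ^ k * qPoch (x * q) q k := by
  rw [prod_Icc_one]
  unfold qPoch
  have h : ∀ j ∈ range k, x * q ^ (1 + j) - 1 = (-1) * (1 - x * q * q ^ j) := by
    intro j _; rw [pow_add, pow_one]; ring
  rw [Finset.prod_congr rfl h, Finset.prod_mul_distrib, Finset.prod_const, card_range]

lemma aux_P1 (q : ℝ) (m t : ℕ) :
    ∏ i ∈ Icc 1 m, (q ^ (m + t) - q ^ i)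
      = (-1) ^ m * q ^ (gg m + m) * qPoch (q ^ t) q m := by
  rw [prod_Icc_one, ← Finset.prod_range_reflect]
  have h : ∀ j ∈ range m, q ^ (m + t) - q ^ (1 + (m - 1 - j))
      = q ^ (m - j) * ((-1) * (1 - q ^ t * q ^ j)) := by
    intro j hj; simp only [mem_range] at hj
    rw [show 1 + (m - 1 - j) = m - j by omega,
        show m + t = (m - j) + (t + j) by omega, pow_add, pow_add]
    ring
  rw [Finset.prod_congr rfl h, Finset.prod_mul_distrib, Finset.prod_mul_distrib,
    Finset.prod_const, card_range, Finset.prod_pow_eq_pow_sum]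
  have hsum : ∑ j ∈ range m, (m - j) = gg m + m := by
    rw [← Finset.sum_range_reflect]
    have h2 : ∀ j ∈ range m, m - (m - 1 - j) = j + 1 := by
      intro j hj; simp only [mem_range] at hj; omega
    rw [Finset.sum_congr rfl h2, Finset.sum_add_distrib, Finset.sum_const, card_range]
    simp [gg]
  rw [hsum]
  unfold qPoch
  ring

lemma aux_P2 (q : ℝ) (m n s x : ℕ) (hx : x ≤ s) :
    ∏ j ∈ Icc 1 n, (q ^ (m + s + j) - q ^ (m + x))
      = (-1) ^ n * q ^ (n * (m + x)) * qPoch (q ^ (s - x + 1)) q n := by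
  have h : ∀ j ∈ Icc 1 n, q ^ (m + s + j) - q ^ (m + x)
      = q ^ (m + x) * (q ^ (s - x) * q ^ j - 1) := by
    intro j _
    rw [show m + s + j = (m + x) + ((s - x) + j) by omega, pow_add, pow_add]
    ring
  rw [Finset.prod_congr rfl h, Finset.prod_mul_distrib, Finset.prod_const, Nat.card_Icc,
    prod_Icc_aux, ← pow_succ, show s - x + 1 = s - x + 1 from rfl]
  rw [show n + 1 - 1 = n by omega, ← pow_mul]
  ring
lemma sum_Icc_one {M : Type*} [AddCommMonoid M] (f : ℕ → M) (k : ℕ) :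
    ∑ i ∈ Icc 1 k, f i = ∑ j ∈ range k, f (1 + j) := by
  rw [← Finset.Ico_add_one_right_eq_Icc, Finset.sum_Ico_eq_sum_range]
  simp

lemma vand_union (q : ℝ) (U V : Finset ℕ) (h : ∀ u ∈ U, ∀ v ∈ V, u < v) :
    vand q (U ∪ V) = vand q U * vand q V * ∏ u ∈ U, ∏ v ∈ V, (q ^ v - q ^ u) := by
  have hd : Disjoint U V := by
    rw [Finset.disjoint_left]; intro x hU hV; exact absurd (h x hU x hV) (lt_irrefl x)
  unfold vand
  rw [Finset.prod_union hd]
  have h1 : ∀ u ∈ U, ((U ∪ V).filter (fun v => u < v)) = U.filter (fun v => u < v) ∪ V := by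
    intro u hu; ext v
    simp only [mem_filter, mem_union]
    constructor
    · rintro ⟨hv | hv, hlt⟩
      · exact Or.inl ⟨hv, hlt⟩
      · exact Or.inr hv
    · rintro (⟨hv, hlt⟩ | hv)
      · exact ⟨Or.inl hv, hlt⟩
      · exact ⟨Or.inr hv, h u hu v hv⟩
  have h2 : ∀ u ∈ V, ((U ∪ V).filter (fun v => u < v)) = V.filter (fun v => u < v) := by
    intro u hu; ext v
    simp only [mem_filter, mem_union]
    constructor
    · rintro ⟨hv | hv, hlt⟩
      · exact absurd (h v hv u hu) (by omega)
      · exact ⟨hv, hlt⟩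
    · rintro ⟨hv, hlt⟩
      exact ⟨Or.inr hv, hlt⟩
  have e1 : ∀ u ∈ U, ∏ v ∈ (U ∪ V).filter (fun v => u < v), (q ^ v - q ^ u)
      = (∏ v ∈ U.filter (fun v => u < v), (q ^ v - q ^ u)) * ∏ v ∈ V, (q ^ v - q ^ u) := by
    intro u hu
    rw [h1 u hu, Finset.prod_union (Finset.disjoint_of_subset_left (Finset.filter_subset _ _) hd)]
  rw [Finset.prod_congr rfl e1, Finset.prod_congr rfl fun u hu =>
    congrArg (fun t => ∏ v ∈ t, (q ^ v - q ^ u)) (h2 u hu), Finset.prod_mul_distrib]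
  ring

lemma vand_shift (q : ℝ) (c : ℕ) (U : Finset ℕ) :
    vand q (U.image (fun x => c + x)) = q ^ (c * gg U.card) * vand q U := by
  unfold vand
  have hinj : ∀ x ∈ U, ∀ y ∈ U, c + x = c + y → x = y := by intro x _ y _ h; omega
  rw [Finset.prod_image hinj]
  have h1 : ∀ u ∈ U, (U.image (fun x => c + x)).filter (fun v => c + u < v)
      = (U.filter (fun v => u < v)).image (fun x => c + x) := by
    intro u hu; ext v
    simp only [mem_filter, mem_image]
    constructor
    · rintro ⟨⟨x, hx, rfl⟩, hlt⟩
      exact ⟨x, ⟨hx, by omega⟩, rfl⟩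
    · rintro ⟨x, ⟨hx, hlt⟩, rfl⟩
      exact ⟨⟨x, hx, rfl⟩, by omega⟩
  have e1 : ∀ u ∈ U, ∏ v ∈ (U.image (fun x => c + x)).filter (fun v => c + u < v),
        (q ^ v - q ^ (c + u))
      = (q ^ c) ^ (U.filter (fun v => u < v)).card
        * ∏ v ∈ U.filter (fun v => u < v), (q ^ v - q ^ u) := by
    intro u hu
    rw [h1 u hu, Finset.prod_image (fun x _ y _ h => by omega)]
    rw [← Finset.prod_const, ← Finset.prod_mul_distrib]
    refine Finset.prod_congr rfl fun x _ => ?_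
    rw [pow_add, pow_add]; ring
  rw [Finset.prod_congr rfl e1, Finset.prod_mul_distrib, Finset.prod_pow_eq_pow_sum, tt_eq,
    ← pow_mul]

lemma vand_Icc (q : ℝ) (k : ℕ) :
    vand q (Icc 1 k) = (-1) ^ gg k * q ^ vv k * Hq q k := by
  unfold vand
  have h1 : ∀ i ∈ Icc 1 k, (Icc 1 k).filter (fun v => i < v) = Icc (i + 1) k := by
    intro i _; ext v; simp only [mem_filter, mem_Icc]; omega
  have h2 : ∀ i ∈ Icc 1 k, ∏ v ∈ (Icc 1 k).filter (fun v => i < v), (q ^ v - q ^ i)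
      = (-1) ^ (k - i) * (q ^ (i * (k - i)) * qPoch q q (k - i)) := by
    intro i hi
    simp only [mem_Icc] at hi
    rw [h1 i (by simp [mem_Icc]; omega)]
    have him : Finset.Icc (i + 1) k = (Finset.Icc 1 (k - i)).image (fun d => i + d) := by
      rw [Finset.image_add_left_Icc]
      congr 1
      omega
    rw [him, Finset.prod_image (fun x _ y _ h => by omega)]
    have h3 : ∀ d ∈ Icc 1 (k - i), q ^ (i + d) - q ^ i = q ^ i * ((1 : ℝ) * q ^ d - 1) := by
      intro d _; rw [pow_add]; ring
    rw [Finset.prod_congr rfl h3, Finset.prod_mul_distrib, Finset.prod_const, Nat.card_Icc,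
      prod_Icc_aux, one_mul]
    rw [show k - i + 1 - 1 = k - i by omega, pow_mul]
    ring
  rw [Finset.prod_congr rfl h2, Finset.prod_mul_distrib, Finset.prod_mul_distrib,
    Finset.prod_pow_eq_pow_sum]
  have hs1 : ∑ i ∈ Icc 1 k, (k - i) = gg k := by
    rw [sum_Icc_one]
    have h4 : ∀ j ∈ range k, k - (1 + j) = k - 1 - j := by intro j _; omega
    rw [Finset.sum_congr rfl h4, Finset.sum_range_reflect (fun j => j) k]
    rfl
  have hs2 : ∏ i ∈ Icc 1 k, qPoch q q (k - i) = Hq q k := by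
    rw [prod_Icc_one]
    have h4 : ∀ j ∈ range k, qPoch q q (k - (1 + j)) = qPoch q q (k - 1 - j) := by
      intro j _; congr 1; omega
    rw [Finset.prod_congr rfl h4, Finset.prod_range_reflect (fun j => qPoch q q j) k]
    rfl
  rw [Finset.prod_pow_eq_pow_sum, hs1, hs2, show (∑ i ∈ Icc 1 k, i * (k - i)) = vv k from rfl]
  ring
lemma qPoch_pos {a q : ℝ} (ha0 : 0 ≤ a) (ha1 : a < 1) (hq0 : 0 ≤ q) (hq1 : q ≤ 1) (k : ℕ) :
    0 < qPoch a q k := by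
  unfold qPoch
  apply Finset.prod_pos
  intro i _
  have h1 : q ^ i ≤ 1 := pow_le_one₀ hq0 hq1
  have h2 : (0:ℝ) ≤ q ^ i := pow_nonneg hq0 i
  nlinarith

lemma Hq_pos {q : ℝ} (hq0 : 0 < q) (hq1 : q < 1) (k : ℕ) : 0 < Hq q k :=
  Finset.prod_pos fun i _ => qPoch_pos hq0.le hq1 hq0.le hq1.le i

lemma vand_ne {q : ℝ} (hq0 : 0 < q) (hq1 : q < 1) (U : Finset ℕ) : vand q U ≠ 0 := by
  unfold vand
  rw [Finset.prod_ne_zero_iff]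
  intro u _
  rw [Finset.prod_ne_zero_iff]
  intro v hv
  rw [Finset.mem_filter] at hv
  have : q ^ v < q ^ u := pow_lt_pow_right_of_lt_one₀ hq0 hq1 hv.2
  intro hc
  nlinarith

lemma vand_Icc_ne {q : ℝ} (hq0 : 0 < q) (hq1 : q < 1) (k : ℕ) : vand q (Icc 1 k) ≠ 0 :=
  vand_ne hq0 hq1 _


lemma aux_Sq_mul (q : ℝ) (hq0 : 0 < q) (hq1 : q < 1) (U : Finset ℕ) :
    Sq q U * vand q (Finset.Icc 1 U.card) * q ^ gg (U.card + 1)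
      = q ^ (∑ x ∈ U, x) * vand q U := by
  unfold Sq
  rw [div_mul_cancel₀ _ (vand_Icc_ne hq0 hq1 _), div2_gg]
  rw [show q ^ ((∑ u ∈ U, (u:ℤ)) - (gg (U.card + 1) : ℤ)) * vand q U * q ^ gg (U.card + 1)
      = q ^ ((∑ u ∈ U, (u:ℤ)) - (gg (U.card + 1) : ℤ)) * (q:ℝ) ^ ((gg (U.card + 1) : ℕ) : ℤ)
        * vand q U by rw [zpow_natCast]; ring]
  rw [← zpow_add₀ (ne_of_gt hq0), show (∑ u ∈ U, (u:ℤ)) - (gg (U.card + 1) : ℤ)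
      + ((gg (U.card + 1) : ℕ) : ℤ) = ((∑ x ∈ U, x : ℕ) : ℤ) by push_cast; ring,
    zpow_natCast]
lemma aux_key (q : ℝ) (hq0 : 0 < q) (hq1 : q < 1) (m n s : ℕ) (U : Finset ℕ)
    (hU : U ⊆ Finset.Icc 1 s) :
    Sq q (Finset.Icc 1 m ∪ U.image (fun x => m + x) ∪ Finset.Icc (m + s + 1) (m + s + n))
        * vand q (Finset.Icc 1 (m + U.card + n)) * q ^ gg (m + U.card + n + 1)
      = (-1) ^ (gg m + gg n + m * U.card + m * n + n * U.card)
        * q ^ (gg m + m + m * U.card + n * (m + s) + (gg n + n) + vv m + m * gg U.card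
            + (m + s) * gg n + vv n + U.card * (gg m + m) + n * (gg m + m)
            + (n * m * U.card + n * ∑ x ∈ U, x) + ∑ x ∈ U, x)
        * (Hq q m * Hq q n)
        * (∏ x ∈ U, qPoch (q ^ x) q m)
        * (∏ j ∈ Finset.Icc 1 n, qPoch (q ^ (s + j)) q m)
        * (∏ x ∈ U, qPoch (q ^ (s - x + 1)) q n)
        * vand q U := by
  have hxmem : ∀ x ∈ U, 1 ≤ x ∧ x ≤ s := by
    intro x hx; have := hU hx; rw [mem_Icc] at this; exact this
  have him3 : Finset.Icc (m + s + 1) (m + s + n)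
      = (Finset.Icc 1 n).image (fun j => (m + s) + j) := by
    rw [Finset.image_add_left_Icc]
  -- separations
  have h12 : ∀ u ∈ Finset.Icc 1 m, ∀ v ∈ U.image (fun x => m + x), u < v := by
    intro u hu v hv
    rw [mem_Icc] at hu
    rw [Finset.mem_image] at hv
    obtain ⟨x, hx, rfl⟩ := hv
    have := hxmem x hx; omega
  have h123 : ∀ u ∈ Finset.Icc 1 m ∪ U.image (fun x => m + x),
      ∀ v ∈ Finset.Icc (m + s + 1) (m + s + n), u < v := by
    intro u hu v hv
    rw [mem_Icc] at hv
    rw [Finset.mem_union] at hu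
    rcases hu with hu | hu
    · rw [mem_Icc] at hu; omega
    · rw [Finset.mem_image] at hu
      obtain ⟨x, hx, rfl⟩ := hu
      have := hxmem x hx; omega
  have hd12 : Disjoint (Finset.Icc 1 m) (U.image (fun x => m + x)) := by
    rw [Finset.disjoint_left]
    intro x h1 h2
    exact absurd (h12 x h1 x h2) (lt_irrefl x)
  have hd123 : Disjoint (Finset.Icc 1 m ∪ U.image (fun x => m + x))
      (Finset.Icc (m + s + 1) (m + s + n)) := by
    rw [Finset.disjoint_left]
    intro x h1 h2
    exact absurd (h123 x h1 x h2) (lt_irrefl x)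
  -- cards
  have hc2 : (U.image (fun x => m + x)).card = U.card :=
    Finset.card_image_of_injOn (fun x _ y _ h => by omega)
  have hcard : (Finset.Icc 1 m ∪ U.image (fun x => m + x)
      ∪ Finset.Icc (m + s + 1) (m + s + n)).card = m + U.card + n := by
    rw [Finset.card_union_of_disjoint hd123, Finset.card_union_of_disjoint hd12, hc2,
      Nat.card_Icc, Nat.card_Icc]
    omega
  -- sum
  have hsumN : (∑ u ∈ Finset.Icc 1 m ∪ U.image (fun x => m + x)
      ∪ Finset.Icc (m + s + 1) (m + s + n), u)
      = (gg m + m) + (m * U.card + ∑ x ∈ U, x) + (n * (m + s) + (gg n + n)) := by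
    rw [Finset.sum_union hd123, Finset.sum_union hd12, sum_Icc_id, gg_succ]
    congr 1
    · congr 1
      rw [Finset.sum_image (fun x _ y _ h => by omega), Finset.sum_add_distrib,
        Finset.sum_const, smul_eq_mul, mul_comm]
    · rw [him3, Finset.sum_image (fun x _ y _ h => by omega), Finset.sum_add_distrib,
        Finset.sum_const, smul_eq_mul, sum_Icc_id, gg_succ, Nat.card_Icc]
      simp [mul_comm]
  -- Sq merge
  have hmerge : Sq q (Finset.Icc 1 m ∪ U.image (fun x => m + x)
        ∪ Finset.Icc (m + s + 1) (m + s + n))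
        * vand q (Finset.Icc 1 (m + U.card + n)) * q ^ gg (m + U.card + n + 1)
      = q ^ ((gg m + m) + (m * U.card + ∑ x ∈ U, x) + (n * (m + s) + (gg n + n)))
        * vand q (Finset.Icc 1 m ∪ U.image (fun x => m + x)
            ∪ Finset.Icc (m + s + 1) (m + s + n)) := by
    have := aux_Sq_mul q hq0 hq1 (Finset.Icc 1 m ∪ U.image (fun x => m + x)
      ∪ Finset.Icc (m + s + 1) (m + s + n))
    rw [hcard, hsumN] at this
    exact this
  rw [hmerge]
  -- expand vand of the union
  rw [vand_union q _ _ h123, vand_union q _ _ h12]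
  -- cross products
  rw [Finset.prod_union hd12 (f := fun u => ∏ v ∈ Finset.Icc (m + s + 1) (m + s + n),
    (q ^ v - q ^ u))]
  -- X12
  have e12 : ∏ u ∈ Finset.Icc 1 m, ∏ v ∈ U.image (fun x => m + x), (q ^ v - q ^ u)
      = (-1) ^ (m * U.card) * q ^ ((gg m + m) * U.card) * ∏ x ∈ U, qPoch (q ^ x) q m := by
    rw [Finset.prod_comm, Finset.prod_image (fun x _ y _ h => by omega)]
    rw [Finset.prod_congr rfl (fun x _ => aux_P1 q m x), Finset.prod_mul_distrib,
      Finset.prod_mul_distrib, Finset.prod_const, Finset.prod_const, ← pow_mul, ← pow_mul]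
  -- X13
  have e13 : ∏ u ∈ Finset.Icc 1 m, ∏ v ∈ Finset.Icc (m + s + 1) (m + s + n), (q ^ v - q ^ u)
      = (-1) ^ (m * n) * q ^ ((gg m + m) * n)
        * ∏ j ∈ Finset.Icc 1 n, qPoch (q ^ (s + j)) q m := by
    rw [Finset.prod_comm, him3, Finset.prod_image (fun x _ y _ h => by omega)]
    have h4 : ∀ j ∈ Finset.Icc 1 n, ∏ u ∈ Finset.Icc 1 m, (q ^ ((m + s) + j) - q ^ u)
        = (-1) ^ m * q ^ (gg m + m) * qPoch (q ^ (s + j)) q m := by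
      intro j _
      have := aux_P1 q m (s + j)
      rw [show m + (s + j) = m + s + j by omega] at this
      exact this
    rw [Finset.prod_congr rfl h4, Finset.prod_mul_distrib, Finset.prod_mul_distrib,
      Finset.prod_const, Finset.prod_const, Nat.card_Icc, show n + 1 - 1 = n by omega,
      ← pow_mul, ← pow_mul]
  -- X23
  have e23 : ∏ u ∈ U.image (fun x => m + x),
        ∏ v ∈ Finset.Icc (m + s + 1) (m + s + n), (q ^ v - q ^ u)
      = (-1) ^ (n * U.card) * q ^ (n * m * U.card + n * ∑ x ∈ U, x)
        * ∏ x ∈ U, qPoch (q ^ (s - x + 1)) q n := by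
    rw [Finset.prod_image (fun x _ y _ h => by omega)]
    have h4 : ∀ x ∈ U, ∏ v ∈ Finset.Icc (m + s + 1) (m + s + n), (q ^ v - q ^ (m + x))
        = (-1) ^ n * q ^ (n * (m + x)) * qPoch (q ^ (s - x + 1)) q n := by
      intro x hx
      rw [him3, Finset.prod_image (fun x _ y _ h => by omega)]
      exact aux_P2 q m n s x (hxmem x hx).2
    rw [Finset.prod_congr rfl h4, Finset.prod_mul_distrib, Finset.prod_mul_distrib,
      Finset.prod_const, ← pow_mul, Finset.prod_pow_eq_pow_sum]
    have h5 : (∑ x ∈ U, n * (m + x)) = n * m * U.card + n * ∑ x ∈ U, x := by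
      rw [← Finset.mul_sum, Finset.sum_add_distrib, Finset.sum_const, smul_eq_mul]
      ring
    rw [h5]
  rw [e12, e13, e23, vand_Icc q m, vand_shift q m U, him3,
    vand_shift q (m + s) (Finset.Icc 1 n), Nat.card_Icc, show n + 1 - 1 = n by omega,
    vand_Icc q n]
  ring
lemma gg_q (k : ℕ) : (gg k : ℚ) = ((k:ℚ)^2 - k)/2 := by
  have h : ((gg k : ℤ) : ℚ) * 2 = ((k:ℤ):ℚ) * (((k:ℤ):ℚ) - 1) := by
    exact_mod_cast congrArg (Int.cast : ℤ → ℚ) (gg_cast k)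
  push_cast at h
  field_simp
  linarith

lemma vv_q (k : ℕ) : (vv k : ℚ) = ((k:ℚ)^3 - k)/6 := by
  have h : ((vv k : ℤ) : ℚ) * 6 = ((k:ℚ)^3 - k) := by
    exact_mod_cast congrArg (Int.cast : ℤ → ℚ) (vv_cast k)
  push_cast at h
  field_simp
  linarith

set_option maxHeartbeats 4000000 in
theorem schur_shift_lemma (m n a b : ℕ) (hm : 0 < m) (hn : 0 < n) (ha : 0 < a)
    (hb : 0 < b) (q : ℝ) (hq0 : 0 < q) (hq1 : q < 1)
    (A B : Finset ℕ) (hdisj : Disjoint A B) (hunion : A ∪ B = Finset.Icc 1 (a + b))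
    (hA : A.card = a) (hB : B.card = b) :
    Sq q (Finset.Icc 1 m ∪ A.image (fun x => m + x) ∪
        Finset.Icc (m + a + b + 1) (m + a + b + n)) *
      Sq q (Finset.Icc 1 m ∪ B.image (fun y => m + y) ∪
        Finset.Icc (m + a + b + 1) (m + a + b + n))
      = q ^ (a * b * n + (a + b) * Nat.choose (n + 1) 2) *
        (∏ i ∈ Finset.Icc 1 (a + b),
          qPoch (q ^ i) q m * qPoch (q ^ (a + b - i + 1)) q n) *
        (∏ j ∈ Finset.Icc 1 n, qPoch (q ^ (a + b + j)) q m ^ 2) *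
        (Hq q a * Hq q b * Hq q m ^ 2 * Hq q n ^ 2 /
          (Hq q (m + n + a) * Hq q (m + n + b))) *
        Sq q A * Sq q B := by
  rw [show m + a + b = m + (a + b) from Nat.add_assoc m a b, choose2,
    show m + n + a = m + a + n by ring, show m + n + b = m + b + n by ring]
  have hqne : q ≠ 0 := ne_of_gt hq0
  have hAsub : A ⊆ Finset.Icc 1 (a + b) := by rw [← hunion]; exact Finset.subset_union_left
  have hBsub : B ⊆ Finset.Icc 1 (a + b) := by rw [← hunion]; exact Finset.subset_union_right
  have kA := aux_key q hq0 hq1 m n (a + b) A hAsub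
  have kB := aux_key q hq0 hq1 m n (a + b) B hBsub
  rw [hA] at kA
  rw [hB] at kB
  have sA := aux_Sq_mul q hq0 hq1 A
  have sB := aux_Sq_mul q hq0 hq1 B
  rw [hA] at sA
  rw [hB] at sB
  have hdiv : ∀ k : ℕ, (vand q (Finset.Icc 1 k) * q ^ gg (k + 1)) / Hq q k
      = (-1) ^ gg k * q ^ (vv k + gg (k + 1)) := by
    intro k
    have hH : Hq q k ≠ 0 := ne_of_gt (Hq_pos hq0 hq1 k)
    rw [vand_Icc, pow_add]
    field_simp
  have hSsum : (∑ x ∈ A, x) + (∑ x ∈ B, x) = gg (a + b) + (a + b) := by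
    rw [← Finset.sum_union hdisj, hunion, sum_Icc_id, gg_succ]
  -- merging products
  have hP1 : ∏ i ∈ Finset.Icc 1 (a + b), qPoch (q ^ i) q m
      = (∏ x ∈ A, qPoch (q ^ x) q m) * ∏ x ∈ B, qPoch (q ^ x) q m := by
    rw [← hunion, Finset.prod_union hdisj]
  have hP3 : ∏ i ∈ Finset.Icc 1 (a + b), qPoch (q ^ (a + b - i + 1)) q n
      = (∏ x ∈ A, qPoch (q ^ (a + b - x + 1)) q n)
        * ∏ x ∈ B, qPoch (q ^ (a + b - x + 1)) q n := by
    rw [← hunion, Finset.prod_union hdisj]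
  have hsplit : ∏ i ∈ Finset.Icc 1 (a + b), (qPoch (q ^ i) q m * qPoch (q ^ (a + b - i + 1)) q n)
      = (∏ i ∈ Finset.Icc 1 (a + b), qPoch (q ^ i) q m)
        * ∏ i ∈ Finset.Icc 1 (a + b), qPoch (q ^ (a + b - i + 1)) q n :=
    Finset.prod_mul_distrib
  have hJ : ∏ j ∈ Finset.Icc 1 n, qPoch (q ^ (a + b + j)) q m ^ 2
      = (∏ j ∈ Finset.Icc 1 n, qPoch (q ^ (a + b + j)) q m) ^ 2 := by
    rw [← Finset.prod_pow]
  -- exponent identities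
  have hσ : gg m + gg n + m * a + m * n + n * a + (gg m + gg n + m * b + m * n + n * b)
        + (gg a + gg b)
      = gg (m + a + n) + gg (m + b + n) := by
    rw [gg_add (m + a) n, gg_add m a, gg_add (m + b) n, gg_add m b]
    ring
  have hE : (gg m + m + m * a + n * (m + (a + b)) + (gg n + n) + vv m + m * gg a
        + (m + (a + b)) * gg n + vv n + a * (gg m + m) + n * (gg m + m)
        + (n * m * a + n * ∑ x ∈ A, x) + ∑ x ∈ A, x)
        + (gg m + m + m * b + n * (m + (a + b)) + (gg n + n) + vv m + m * gg b
        + (m + (a + b)) * gg n + vv n + b * (gg m + m) + n * (gg m + m)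
        + (n * m * b + n * ∑ x ∈ B, x) + ∑ x ∈ B, x)
        + (vv a + gg (a + 1)) + (vv b + gg (b + 1))
      = a * b * n + (a + b) * gg (n + 1) + (vv (m + a + n) + gg (m + a + n + 1))
        + (vv (m + b + n) + gg (m + b + n + 1)) + ((∑ x ∈ A, x) + ∑ x ∈ B, x) := by
    have hSsumQ := congrArg (Nat.cast : ℕ → ℚ) hSsum
    push_cast [gg_q] at hSsumQ
    have hq : ((gg m + m + m * a + n * (m + (a + b)) + (gg n + n) + vv m + m * gg a
        + (m + (a + b)) * gg n + vv n + a * (gg m + m) + n * (gg m + m)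
        + (n * m * a + n * ∑ x ∈ A, x) + ∑ x ∈ A, x)
        + (gg m + m + m * b + n * (m + (a + b)) + (gg n + n) + vv m + m * gg b
        + (m + (a + b)) * gg n + vv n + b * (gg m + m) + n * (gg m + m)
        + (n * m * b + n * ∑ x ∈ B, x) + ∑ x ∈ B, x)
        + (vv a + gg (a + 1)) + (vv b + gg (b + 1)) : ℚ)
        = ((a * b * n + (a + b) * gg (n + 1) + (vv (m + a + n) + gg (m + a + n + 1))
        + (vv (m + b + n) + gg (m + b + n + 1)) + ((∑ x ∈ A, x) + ∑ x ∈ B, x) : ℕ) : ℚ) := by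
      push_cast [gg_q, vv_q]
      linear_combination (n : ℚ) * hSsumQ
    exact_mod_cast hq
  -- nonzero denominator for cancellation
  have hDne : vand q (Finset.Icc 1 (m + a + n)) * q ^ gg (m + a + n + 1)
      * (vand q (Finset.Icc 1 (m + b + n)) * q ^ gg (m + b + n + 1))
      * (vand q (Finset.Icc 1 a) * q ^ gg (a + 1))
      * (vand q (Finset.Icc 1 b) * q ^ gg (b + 1)) ≠ 0 := by
    repeat' apply mul_ne_zero
    all_goals first
      | exact vand_ne hq0 hq1 _
      | exact pow_ne_zero _ hqne
  apply mul_right_cancel₀ hDne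
  calc Sq q (Finset.Icc 1 m ∪ A.image (fun x => m + x) ∪
        Finset.Icc (m + (a + b) + 1) (m + (a + b) + n)) *
      Sq q (Finset.Icc 1 m ∪ B.image (fun y => m + y) ∪
        Finset.Icc (m + (a + b) + 1) (m + (a + b) + n))
      * (vand q (Finset.Icc 1 (m + a + n)) * q ^ gg (m + a + n + 1)
        * (vand q (Finset.Icc 1 (m + b + n)) * q ^ gg (m + b + n + 1))
        * (vand q (Finset.Icc 1 a) * q ^ gg (a + 1))
        * (vand q (Finset.Icc 1 b) * q ^ gg (b + 1)))
      = (Sq q (Finset.Icc 1 m ∪ A.image (fun x => m + x) ∪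
          Finset.Icc (m + (a + b) + 1) (m + (a + b) + n))
          * vand q (Finset.Icc 1 (m + a + n)) * q ^ gg (m + a + n + 1))
        * (Sq q (Finset.Icc 1 m ∪ B.image (fun y => m + y) ∪
          Finset.Icc (m + (a + b) + 1) (m + (a + b) + n))
          * vand q (Finset.Icc 1 (m + b + n)) * q ^ gg (m + b + n + 1))
        * (vand q (Finset.Icc 1 a) * q ^ gg (a + 1))
        * (vand q (Finset.Icc 1 b) * q ^ gg (b + 1)) := by ring
    _ = ((-1) ^ (gg m + gg n + m * a + m * n + n * a)
        * q ^ (gg m + m + m * a + n * (m + (a + b)) + (gg n + n) + vv m + m * gg a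
            + (m + (a + b)) * gg n + vv n + a * (gg m + m) + n * (gg m + m)
            + (n * m * a + n * ∑ x ∈ A, x) + ∑ x ∈ A, x)
        * (Hq q m * Hq q n)
        * (∏ x ∈ A, qPoch (q ^ x) q m)
        * (∏ j ∈ Finset.Icc 1 n, qPoch (q ^ (a + b + j)) q m)
        * (∏ x ∈ A, qPoch (q ^ (a + b - x + 1)) q n)
        * vand q A)
        * ((-1) ^ (gg m + gg n + m * b + m * n + n * b)
        * q ^ (gg m + m + m * b + n * (m + (a + b)) + (gg n + n) + vv m + m * gg b
            + (m + (a + b)) * gg n + vv n + b * (gg m + m) + n * (gg m + m)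
            + (n * m * b + n * ∑ x ∈ B, x) + ∑ x ∈ B, x)
        * (Hq q m * Hq q n)
        * (∏ x ∈ B, qPoch (q ^ x) q m)
        * (∏ j ∈ Finset.Icc 1 n, qPoch (q ^ (a + b + j)) q m)
        * (∏ x ∈ B, qPoch (q ^ (a + b - x + 1)) q n)
        * vand q B)
        * (((-1) ^ gg a * q ^ vv a * Hq q a) * q ^ gg (a + 1))
        * (((-1) ^ gg b * q ^ vv b * Hq q b) * q ^ gg (b + 1)) := by
      rw [kA, kB, vand_Icc q a, vand_Icc q b]
    _ = (-1) ^ (gg m + gg n + m * a + m * n + n * a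
          + (gg m + gg n + m * b + m * n + n * b) + (gg a + gg b))
        * q ^ ((gg m + m + m * a + n * (m + (a + b)) + (gg n + n) + vv m + m * gg a
            + (m + (a + b)) * gg n + vv n + a * (gg m + m) + n * (gg m + m)
            + (n * m * a + n * ∑ x ∈ A, x) + ∑ x ∈ A, x)
            + (gg m + m + m * b + n * (m + (a + b)) + (gg n + n) + vv m + m * gg b
            + (m + (a + b)) * gg n + vv n + b * (gg m + m) + n * (gg m + m)
            + (n * m * b + n * ∑ x ∈ B, x) + ∑ x ∈ B, x)
            + (vv a + gg (a + 1)) + (vv b + gg (b + 1)))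
        * (Hq q m ^ 2 * Hq q n ^ 2 * Hq q a * Hq q b
          * ((∏ x ∈ A, qPoch (q ^ x) q m) * ∏ x ∈ B, qPoch (q ^ x) q m)
          * (∏ j ∈ Finset.Icc 1 n, qPoch (q ^ (a + b + j)) q m) ^ 2
          * ((∏ x ∈ A, qPoch (q ^ (a + b - x + 1)) q n)
            * ∏ x ∈ B, qPoch (q ^ (a + b - x + 1)) q n)
          * (vand q A * vand q B)) := by ring
    _ = (-1) ^ (gg (m + a + n) + gg (m + b + n))
        * q ^ (a * b * n + (a + b) * gg (n + 1) + (vv (m + a + n) + gg (m + a + n + 1))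
            + (vv (m + b + n) + gg (m + b + n + 1)) + ((∑ x ∈ A, x) + ∑ x ∈ B, x))
        * (Hq q m ^ 2 * Hq q n ^ 2 * Hq q a * Hq q b
          * ((∏ x ∈ A, qPoch (q ^ x) q m) * ∏ x ∈ B, qPoch (q ^ x) q m)
          * (∏ j ∈ Finset.Icc 1 n, qPoch (q ^ (a + b + j)) q m) ^ 2
          * ((∏ x ∈ A, qPoch (q ^ (a + b - x + 1)) q n)
            * ∏ x ∈ B, qPoch (q ^ (a + b - x + 1)) q n)
          * (vand q A * vand q B)) := by rw [hσ, hE]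
    _ = (q ^ (∑ x ∈ A, x) * vand q A) * (q ^ (∑ x ∈ B, x) * vand q B)
        * ((q ^ (a * b * n + (a + b) * gg (n + 1))
          * ∏ i ∈ Finset.Icc 1 (a + b),
              (qPoch (q ^ i) q m * qPoch (q ^ (a + b - i + 1)) q n))
          * (∏ j ∈ Finset.Icc 1 n, qPoch (q ^ (a + b + j)) q m ^ 2)
          * (Hq q a * Hq q b * Hq q m ^ 2 * Hq q n ^ 2)
          * ((-1) ^ gg (m + a + n) * q ^ (vv (m + a + n) + gg (m + a + n + 1)))
          * ((-1) ^ gg (m + b + n) * q ^ (vv (m + b + n) + gg (m + b + n + 1)))) := by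
      rw [hsplit, hP1, hP3, hJ]; ring
    _ = (Sq q A * vand q (Finset.Icc 1 a) * q ^ gg (a + 1))
        * (Sq q B * vand q (Finset.Icc 1 b) * q ^ gg (b + 1))
        * ((q ^ (a * b * n + (a + b) * gg (n + 1))
          * ∏ i ∈ Finset.Icc 1 (a + b),
              (qPoch (q ^ i) q m * qPoch (q ^ (a + b - i + 1)) q n))
          * (∏ j ∈ Finset.Icc 1 n, qPoch (q ^ (a + b + j)) q m ^ 2)
          * (Hq q a * Hq q b * Hq q m ^ 2 * Hq q n ^ 2)
          * ((vand q (Finset.Icc 1 (m + a + n)) * q ^ gg (m + a + n + 1)) / Hq q (m + a + n))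
          * ((vand q (Finset.Icc 1 (m + b + n)) * q ^ gg (m + b + n + 1)) / Hq q (m + b + n))) := by
      rw [sA, sB, hdiv (m + a + n), hdiv (m + b + n)]
    _ = (q ^ (a * b * n + (a + b) * gg (n + 1)) *
        (∏ i ∈ Finset.Icc 1 (a + b),
          qPoch (q ^ i) q m * qPoch (q ^ (a + b - i + 1)) q n) *
        (∏ j ∈ Finset.Icc 1 n, qPoch (q ^ (a + b + j)) q m ^ 2) *
        (Hq q a * Hq q b * Hq q m ^ 2 * Hq q n ^ 2 /
          (Hq q (m + a + n) * Hq q (m + b + n))) *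
        Sq q A * Sq q B)
      * (vand q (Finset.Icc 1 (m + a + n)) * q ^ gg (m + a + n + 1)
        * (vand q (Finset.Icc 1 (m + b + n)) * q ^ gg (m + b + n + 1))
        * (vand q (Finset.Icc 1 a) * q ^ gg (a + 1))
        * (vand q (Finset.Icc 1 b) * q ^ gg (b + 1))) := by
      have h1 : Hq q (m + a + n) ≠ 0 := ne_of_gt (Hq_pos hq0 hq1 _)
      have h2 : Hq q (m + b + n) ≠ 0 := ne_of_gt (Hq_pos hq0 hq1 _)
      field_simp
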